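/- Define the partial action of g = [[A,B],[C,D]] ∈ O(n,n|ℝ) on an antisymmetric n×n real matrix θ by g·θ = (Aθ+B)(Cθ+D)⁻¹, whenever Cθ+D is invertible. Then g·θ is again antisymmetric. -/
import Mathlib


open Matrix

/-- If `g = [[A,B],[C,D]] ∈ O(n,n|ℝ)` (i.e. `AᵗC + CᵗA = 0`, `BᵗD + DᵗB = 0`,
`AᵗD + CᵗB = 1`), `θ` is antisymmetric and `Cθ + D` is invertible, then
`g·θ = (Aθ + B)(Cθ + D)⁻¹` is again antisymmetric. -/
theorem stmt8 (n : ℕ) (A B C D θ : Matrix (Fin n) (Fin n) ℝ)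
    (h1 : Aᵀ * C + Cᵀ * A = 0) (h2 : Bᵀ * D + Dᵀ * B = 0) (h3 : Aᵀ * D + Cᵀ * B = 1)
    (hθ : θᵀ = -θ) (hinv : IsUnit (C * θ + D)) :
    ((A * θ + B) * (C * θ + D)⁻¹)ᵀ = -((A * θ + B) * (C * θ + D)⁻¹) := by
  have h4 : Bᵀ * C + Dᵀ * A = 1 := by
    have := congrArg transpose h3
    simpa [transpose_add, transpose_mul, add_comm] using this
  have key : (A * θ + B)ᵀ * (C * θ + D) + (C * θ + D)ᵀ * (A * θ + B) = 0 := by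
    have expand : (A * θ + B)ᵀ * (C * θ + D) + (C * θ + D)ᵀ * (A * θ + B)
        = θᵀ * (Aᵀ * C + Cᵀ * A) * θ + θᵀ * (Aᵀ * D + Cᵀ * B)
          + (Bᵀ * C + Dᵀ * A) * θ + (Bᵀ * D + Dᵀ * B) := by
      simp only [transpose_add, transpose_mul]
      noncomm_ring
    rw [expand, h1, h3, h2, h4, hθ]
    noncomm_ring
  have hT : IsUnit (C * θ + D)ᵀ := (Matrix.isUnit_iff_isUnit_det _).mpr (by rw [Matrix.det_transpose]; exact (Matrix.isUnit_iff_isUnit_det _).mp hinv)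
  have hAB : (A * θ + B)ᵀ = -((C * θ + D)ᵀ * ((A * θ + B) * (C * θ + D)⁻¹)) := by
    have := congrArg (· * (C * θ + D)⁻¹) (eq_neg_of_add_eq_zero_left key)
    simpa [mul_assoc, Matrix.mul_nonsing_inv _ ((Matrix.isUnit_iff_isUnit_det _).mp hinv)] using this
  rw [transpose_mul, transpose_nonsing_inv, hAB, mul_neg, ← mul_assoc,
    Matrix.nonsing_inv_mul _ ((Matrix.isUnit_iff_isUnit_det _).mp hT), one_mul]
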